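/- arXiv:1701.06630 — 2 statements merged into one kernel-verified Lean document; each statement's English description precedes it below -/
import Mathlib

section
/- Let Φ be a barrelled nuclear space and let {L_t}_{t≥0} be a cylindrical process in Φ'. Suppose that for every t ≥ 0 the cylindrical distribution of L_t extends to a Radon probability measure μ_{L_t} on Φ'_β, and for every T > 0 the family {μ_{L_t} : t ∈ [0,T]} is uniformly tight. Then for every T > 0 the family of linear maps {L_t : t ∈ [0,T]} from Φ into L⁰(Ω,F,P) is equicontinuous. -/
open MeasureTheory ProbabilityTheory Complex Filter Set
open scoped ENNReal NNReal Topology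

noncomputable section

variable {Φ : Type*} [AddCommGroup Φ] [Module ℝ Φ] [TopologicalSpace Φ]

/-- The projection `π_{φ₁,…,φₙ} : Φ' → ℝⁿ`, `f ↦ (f[φ₁],…,f[φₙ])`. -/
def cylProj {Φ : Type*} [AddCommGroup Φ] [Module ℝ Φ] [TopologicalSpace Φ]
    {n : ℕ} (φ : Fin n → Φ) : (Φ →L[ℝ] ℝ) → (Fin n → ℝ) :=
  fun f i => f (φ i)

/-- The collection of cylindrical subsets of `Φ'` based on `M ⊆ Φ`. -/
def cylSets (M : Set Φ) : Set (Set (Φ →L[ℝ] ℝ)) :=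
  {Z | ∃ (n : ℕ) (φ : Fin n → Φ), (∀ i, φ i ∈ M) ∧
    ∃ A : Set (Fin n → ℝ), MeasurableSet A ∧ Z = cylProj φ ⁻¹' A}

/-- A Radon measure: every Borel set can be inner approximated by compact sets. -/
def IsRadon {X : Type*} [TopologicalSpace X] [MeasurableSpace X] (μ : Measure X) : Prop :=
  ∀ A : Set X, MeasurableSet A → ∀ ε : ℝ≥0∞, 0 < ε →
    ∃ K, K ⊆ A ∧ IsCompact K ∧ μ (A \ K) < ε

/-- Convolution of two measures. -/
def conv' {G : Type*} [Add G] [MeasurableSpace G] (μ ν : Measure G) : Measure G :=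
  Measure.map (fun p : G × G => p.1 + p.2) (μ.prod ν)

/-- `n`-fold convolution power, with the convention `μ^{∗0} = δ₀`. -/
def convPow {G : Type*} [AddMonoid G] [MeasurableSpace G] (μ : Measure G) : ℕ → Measure G
  | 0 => Measure.dirac 0
  | n + 1 => conv' (convPow μ n) μ

/-- A Hilbertian seminorm: induced by a symmetric nonnegative bilinear form. -/
def IsHilbertian (p : Seminorm ℝ Φ) : Prop :=
  ∃ B : Φ →ₗ[ℝ] Φ →ₗ[ℝ] ℝ, (∀ x y, B x y = B y x) ∧ (∀ x, 0 ≤ B x x) ∧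
    ∀ x, p x = Real.sqrt (B x x)

/-- `e` is an orthonormal basis for the Hilbertian seminorm `q` with bilinear form `B`:
orthonormality together with density of the span in the `q`-topology. -/
def IsONBasisFor (q : Seminorm ℝ Φ) (B : Φ →ₗ[ℝ] Φ →ₗ[ℝ] ℝ) (e : ℕ → Φ) : Prop :=
  (∀ x y, B x y = B y x) ∧ (∀ x, q x = Real.sqrt (B x x)) ∧
  (∀ i j, B (e i) (e j) = if i = j then 1 else 0) ∧
  ∀ φ : Φ, ∀ ε : ℝ, 0 < ε → ∃ c : ℕ →₀ ℝ, q (φ - c.sum fun i a => a • e i) < ε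

/-- The canonical inclusion `i_{p,q} : Φ_q → Φ_p` (for `p ≤ q`) is Hilbert–Schmidt. -/
def IsHSPair (p q : Seminorm ℝ Φ) : Prop :=
  p ≤ q ∧ ∃ (B : Φ →ₗ[ℝ] Φ →ₗ[ℝ] ℝ) (e : ℕ → Φ),
    IsONBasisFor q B e ∧ Summable (fun n => (p (e n)) ^ 2)

/-- Auxiliary: the topology of `Φ` is generated by the seminorm family `P`. -/
def GeneratesTopology {ι : Type} [Nonempty ι] (P : SeminormFamily ℝ Φ ι) : Prop :=
  WithSeminorms P

/-- A nuclear space: the topology is generated by a family of Hilbertian seminorms such that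
each member is dominated by another member with Hilbert–Schmidt canonical inclusion. -/
class IsNuclearSpace (Φ : Type*) [AddCommGroup Φ] [Module ℝ Φ] [TopologicalSpace Φ] : Prop where
  out : ∃ (ι : Type) (hne : Nonempty ι) (P : SeminormFamily ℝ Φ ι),
    @GeneratesTopology Φ _ _ _ ι hne P ∧
    (∀ i, IsHilbertian (P i)) ∧ ∀ i, ∃ j, IsHSPair (P i) (P j)

variable [MeasurableSpace (Φ →L[ℝ] ℝ)]

/-- Characteristic function of a measure on the dual. -/
def charFun' (μ : Measure (Φ →L[ℝ] ℝ)) (φ : Φ) : ℂ :=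
  ∫ f, Complex.exp (Complex.I * (f φ : ℂ)) ∂μ

/-- Dual "norm" `p'(f) = sup {|f[φ]| : p(φ) ≤ 1}`, with values in `ℝ≥0∞`. -/
def dualNorm (p : Seminorm ℝ Φ) (f : Φ →L[ℝ] ℝ) : ℝ≥0∞ :=
  ⨆ φ ∈ {ψ : Φ | p ψ ≤ 1}, ENNReal.ofReal |f φ|

/-- The unit ball `B_{p'}(1)` of the dual norm. -/
def dualBall (p : Seminorm ℝ Φ) : Set (Φ →L[ℝ] ℝ) :=
  {f | dualNorm p f ≤ 1}

/-- A `Φ'_β`-valued Lévy process: starts at `0` a.s., has independent and stationary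
increments, Radon distributions, and distributions weakly continuous at `0`. -/
structure IsLevyProcess {Ω : Type*} [MeasurableSpace Ω]
    (P : Measure Ω) (L : ℝ → Ω → (Φ →L[ℝ] ℝ)) : Prop where
  measurable : ∀ t : ℝ, Measurable (L t)
  init : ∀ᵐ ω ∂P, L 0 ω = 0
  indepIncrements : ∀ (n : ℕ) (t : Fin (n + 1) → ℝ), Monotone t → 0 ≤ t 0 →
    iIndepFun (fun i : Fin (n + 1) => fun ω =>
      if i = 0 then L (t 0) ω else L (t i) ω - L (t (i - 1)) ω) P
  stationary : ∀ s t : ℝ, 0 ≤ s → s ≤ t →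
    P.map (fun ω => L t ω - L s ω) = P.map (L (t - s))
  radon : ∀ t : ℝ, 0 ≤ t → IsRadon (P.map (L t))
  weakCont : ∀ g : BoundedContinuousFunction (Φ →L[ℝ] ℝ) ℝ,
    Tendsto (fun t => ∫ f, g f ∂(P.map (L t))) (nhdsWithin 0 (Set.Ici 0)) (nhds (g 0))

/-- if the cylindrical distributions of a cylindrical process on the dual of a
barrelled nuclear space extend to Radon probability measures that are uniformly tight on
compact time intervals, the family `{L_t : t ∈ [0,T]}` of linear maps `Φ → L⁰(Ω,F,P)` is
equicontinuous (at zero, in the topology of convergence in probability). -/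
theorem statement3 [BarrelledSpace ℝ Φ] [IsNuclearSpace Φ] [BorelSpace (Φ →L[ℝ] ℝ)]
    {Ω : Type*} [MeasurableSpace Ω] (P : Measure Ω) [IsProbabilityMeasure P]
    (L : ℝ → Φ → Ω → ℝ)
    (hmeas : ∀ (t : ℝ) (φ : Φ), Measurable (L t φ))
    (hadd : ∀ (t : ℝ) (φ ψ : Φ), ∀ᵐ ω ∂P, L t (φ + ψ) ω = L t φ ω + L t ψ ω)
    (hsmul : ∀ (t : ℝ) (a : ℝ) (φ : Φ), ∀ᵐ ω ∂P, L t (a • φ) ω = a * L t φ ω)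
    (μ : ℝ → Measure (Φ →L[ℝ] ℝ))
    (hext : ∀ t : ℝ, 0 ≤ t → IsProbabilityMeasure (μ t) ∧ IsRadon (μ t) ∧
      ∀ (n : ℕ) (φ : Fin n → Φ) (A : Set (Fin n → ℝ)), MeasurableSet A →
        μ t (cylProj φ ⁻¹' A) = P {ω | (fun i => L t (φ i) ω) ∈ A})
    (htight : ∀ T : ℝ, 0 < T → ∀ ε : ℝ≥0∞, 0 < ε →
      ∃ K : Set (Φ →L[ℝ] ℝ), IsCompact K ∧ ∀ t ∈ Set.Icc (0:ℝ) T, μ t Kᶜ < ε) :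
    ∀ T : ℝ, 0 < T → ∀ ε : ℝ, 0 < ε → ∃ U ∈ 𝓝 (0 : Φ), ∀ φ ∈ U,
      ∀ t ∈ Set.Icc (0:ℝ) T, P {ω | ε ≤ |L t φ ω|} < ENNReal.ofReal ε := by
  obtain ⟨ι, hne, Pf, hgen, -, -⟩ := ‹IsNuclearSpace Φ›.out
  have hws : WithSeminorms Pf := hgen
  haveI : IsTopologicalAddGroup Φ := hws.topologicalAddGroup
  haveI : ContinuousSMul ℝ Φ := hws.continuousSMul
  intro T hT ε hε
  obtain ⟨K, hKc, hKlt⟩ := htight T hT (ENNReal.ofReal ε) (ENNReal.ofReal_pos.2 hε)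
  -- the seminorm `p φ = sup_{f ∈ K} |f φ|`
  set q : K → Seminorm ℝ Φ :=
    fun f => (normSeminorm ℝ ℝ).comp ((f : Φ →L[ℝ] ℝ) : Φ →ₗ[ℝ] ℝ) with hq
  have hqapp : ∀ (f : K) (φ : Φ), q f φ = |(f : Φ →L[ℝ] ℝ) φ| := fun f φ => rfl
  have hbdd : BddAbove (Set.range q) := by
    rw [Seminorm.bddAbove_range_iff]
    intro φ
    have hcomp : IsCompact ((fun f : Φ →L[ℝ] ℝ => |f φ|) '' K) :=
      hKc.image (continuous_abs.comp (continuous_eval_const φ))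
    refine hcomp.bddAbove.mono ?_
    rintro x ⟨f, rfl⟩
    exact ⟨(f : Φ →L[ℝ] ℝ), f.2, rfl⟩
  set p : Seminorm ℝ Φ := ⨆ f : K, q f with hp
  have hqcont : ∀ f : K, Continuous (q f) := by
    intro f
    have : Continuous fun φ : Φ => |(f : Φ →L[ℝ] ℝ) φ| :=
      continuous_abs.comp (f : Φ →L[ℝ] ℝ).continuous
    rw [show ⇑(q f) = fun φ : Φ => |(f : Φ →L[ℝ] ℝ) φ| from funext (hqapp f)]
    exact this
  have hpcont : Continuous p := by
    have := Seminorm.continuous_iSup q hqcont hbdd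
    rwa [← Seminorm.coe_iSup_eq hbdd] at this
  -- the neighborhood
  refine ⟨p ⁻¹' Set.Iio ε, ?_, ?_⟩
  · have hopen : IsOpen (p ⁻¹' Set.Iio ε) := isOpen_Iio.preimage hpcont
    exact hopen.mem_nhds (by simpa using hε)
  intro φ hφ t ht
  have hφK : ∀ f ∈ K, |f φ| < ε := by
    intro f hf
    have hle : |f φ| ≤ p φ := by
      rw [hp, Seminorm.iSup_apply hbdd]
      exact le_ciSup (Seminorm.bddAbove_range_iff.mp hbdd φ) (⟨f, hf⟩ : K)
    exact lt_of_le_of_lt hle hφ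
  -- pass from `P` to `μ t`
  have hA : MeasurableSet {x : Fin 1 → ℝ | ε ≤ |x 0|} := by
    have : Measurable fun x : Fin 1 → ℝ => |x 0| := (measurable_pi_apply 0).abs
    exact this measurableSet_Ici
  have key := (hext t ht.1).2.2 1 (fun _ => φ) {x | ε ≤ |x 0|} hA
  have hset : cylProj (fun _ : Fin 1 => φ) ⁻¹' {x | ε ≤ |x 0|} = {f : Φ →L[ℝ] ℝ | ε ≤ |f φ|} :=
    rfl
  have hset2 : {ω | (fun i : Fin 1 => L t ((fun _ => φ) i) ω) ∈ {x | ε ≤ |x 0|}}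
      = {ω | ε ≤ |L t φ ω|} := rfl
  rw [hset, hset2] at key
  rw [← key]
  refine lt_of_le_of_lt (measure_mono ?_) (hKlt t ht)
  intro f hf
  simp only [Set.mem_setOf_eq] at hf
  intro hfK
  exact absurd hf (not_le.2 (hφK f hfK))
end
end

section
/- (Fernique-type estimate) Let μ be an infinitely divisible Radon probability measure on Φ'_β, p a continuous Hilbertian semi-norm on Φ, and ε ∈ (0, 1/4] such that |1 − μ̂(φ)| < ε whenever p(φ) ≤ 1. Then for every φ ∈ Φ and every n ∈ ℕ, n·(1 − Re μ̂^{1/n}(φ)) ≤ 8ε(1 + p(φ)²), where μ̂^{1/n} denotes the characteristic function of an n-th convolution root of μ. -/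
open MeasureTheory ProbabilityTheory Complex Filter Set
open scoped ENNReal NNReal Topology

noncomputable section

variable {Φ : Type*} [AddCommGroup Φ] [Module ℝ Φ] [TopologicalSpace Φ]

variable [MeasurableSpace (Φ →L[ℝ] ℝ)]

/-! ### Auxiliary lemmas for statement12 -/

section AuxStatement12

private lemma trig_aux (x : ℝ) : ∀ m : ℕ, |Real.sin (m * x)| ≤ m * |Real.sin x| ∧
    1 - Real.cos (m * x) ≤ (m : ℝ) ^ 2 * (1 - Real.cos x) := by
  intro m
  induction m with
  | zero => simp
  | succ m ih =>
    obtain ⟨hs, hc⟩ := ih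
    have h1 : (0:ℝ) ≤ 1 - Real.cos x := by nlinarith [Real.cos_le_one x]
    have hax : ((m + 1 : ℕ) : ℝ) * x = m * x + x := by push_cast; ring
    have habs : Real.sin (m * x) * Real.sin x ≤ (m : ℝ) * (|Real.sin x| * |Real.sin x|) := by
      calc Real.sin (m * x) * Real.sin x ≤ |Real.sin (m * x) * Real.sin x| := le_abs_self _
        _ = |Real.sin (m * x)| * |Real.sin x| := abs_mul _ _
        _ ≤ ((m : ℝ) * |Real.sin x|) * |Real.sin x| :=
            mul_le_mul_of_nonneg_right hs (abs_nonneg _)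
        _ = (m : ℝ) * (|Real.sin x| * |Real.sin x|) := by ring
    have hsq : |Real.sin x| * |Real.sin x| = 1 - Real.cos x * Real.cos x := by
      rw [← _root_.abs_mul, _root_.abs_of_nonneg (mul_self_nonneg _)]
      nlinarith [Real.sin_sq_add_cos_sq x]
    constructor
    · rw [hax, Real.sin_add]
      calc |Real.sin (m * x) * Real.cos x + Real.cos (m * x) * Real.sin x|
          ≤ |Real.sin (m * x) * Real.cos x| + |Real.cos (m * x) * Real.sin x| := abs_add_le _ _
        _ ≤ |Real.sin (m * x)| * 1 + 1 * |Real.sin x| := by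
            rw [abs_mul, abs_mul]
            gcongr
            · exact Real.abs_cos_le_one x
            · exact Real.abs_cos_le_one (m * x)
        _ ≤ (m : ℝ) * |Real.sin x| * 1 + 1 * |Real.sin x| := by gcongr
        _ = ((m + 1 : ℕ) : ℝ) * |Real.sin x| := by push_cast; ring
    · rw [hax, Real.cos_add]
      have hcm1 : Real.cos (m * x) ≤ 1 := Real.cos_le_one _
      push_cast
      nlinarith [habs, hsq, hc, h1, mul_nonneg (sub_nonneg.2 hcm1) h1,
        Nat.cast_nonneg (α := ℝ) m, Real.cos_le_one x,
        mul_nonneg (Nat.cast_nonneg (α := ℝ) m) (mul_nonneg h1 h1)]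

variable [BorelSpace (Φ →L[ℝ] ℝ)]

private lemma cont_integrand [ContinuousSMul ℝ Φ] (φ : Φ) :
    Continuous fun f : Φ →L[ℝ] ℝ => Complex.exp (Complex.I * ((f φ : ℝ) : ℂ)) :=
  Complex.continuous_exp.comp
    (continuous_const.mul (Complex.continuous_ofReal.comp (continuous_eval_const φ)))

private lemma norm_exp_I_mul (x : ℝ) : ‖Complex.exp (Complex.I * (x : ℂ))‖ = 1 := by
  rw [Complex.norm_exp]
  simp [Complex.mul_re]

private lemma integrable_integrand [ContinuousSMul ℝ Φ] (ν : Measure (Φ →L[ℝ] ℝ))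
    [IsFiniteMeasure ν] (φ : Φ) :
    Integrable (fun f : Φ →L[ℝ] ℝ => Complex.exp (Complex.I * ((f φ : ℝ) : ℂ))) ν :=
  (integrable_const (1 : ℝ)).mono' (cont_integrand φ).aestronglyMeasurable
    (Filter.Eventually.of_forall fun f => by rw [norm_exp_I_mul])

private lemma integrable_cos [ContinuousSMul ℝ Φ] (ν : Measure (Φ →L[ℝ] ℝ))
    [IsFiniteMeasure ν] (c : ℝ) (φ : Φ) :
    Integrable (fun f : Φ →L[ℝ] ℝ => Real.cos (c * f φ)) ν :=
  (integrable_const (1 : ℝ)).mono'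
    ((Real.continuous_cos.comp
      (continuous_const.mul (continuous_eval_const φ))).aestronglyMeasurable)
    (Filter.Eventually.of_forall fun f => by
      rw [Real.norm_eq_abs]; exact Real.abs_cos_le_one _)

private lemma charFun'_re_eq [ContinuousSMul ℝ Φ] (ν : Measure (Φ →L[ℝ] ℝ))
    [IsFiniteMeasure ν] (φ : Φ) :
    (charFun' ν φ).re = ∫ f, Real.cos (f φ) ∂ν := by
  have h := integral_re (μ := ν) (integrable_integrand ν φ)
  simp only [RCLike.re_to_complex] at h
  rw [charFun', ← h]
  congr 1
  funext f
  simp [Complex.exp_re, Complex.mul_re, Complex.mul_im]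

private lemma charFun'_abs_le_one (ν : Measure (Φ →L[ℝ] ℝ)) [IsProbabilityMeasure ν] (φ : Φ) :
    ‖charFun' ν φ‖ ≤ 1 := by
  rw [charFun']
  calc ‖∫ f, Complex.exp (Complex.I * ((f φ : ℝ) : ℂ)) ∂ν‖
      ≤ ∫ f, ‖Complex.exp (Complex.I * ((f φ : ℝ) : ℂ))‖ ∂ν := norm_integral_le_integral_norm _
    _ = ∫ (_ : Φ →L[ℝ] ℝ), (1:ℝ) ∂ν := by
        congr 1; funext f; exact norm_exp_I_mul _
    _ = 1 := by simp

private lemma charFun'_zero (ν : Measure (Φ →L[ℝ] ℝ)) [IsProbabilityMeasure ν] :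
    charFun' ν (0 : Φ) = 1 := by
  rw [charFun']
  simp

private lemma charFun'_scale_le [ContinuousSMul ℝ Φ] (ν : Measure (Φ →L[ℝ] ℝ))
    [IsProbabilityMeasure ν] (ψ : Φ) (m : ℕ) :
    1 - (charFun' ν ((m : ℝ) • ψ)).re ≤ (m : ℝ) ^ 2 * (1 - (charFun' ν ψ).re) := by
  rw [charFun'_re_eq, charFun'_re_eq]
  have hrw : (fun f : Φ →L[ℝ] ℝ => Real.cos (f ((m : ℝ) • ψ)))
      = fun f : Φ →L[ℝ] ℝ => Real.cos ((m : ℝ) * f ψ) := by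
    funext f; rw [ContinuousLinearMap.map_smul, smul_eq_mul]
  rw [hrw]
  have hint1 : Integrable (fun f : Φ →L[ℝ] ℝ => Real.cos ((m : ℝ) * f ψ)) ν :=
    integrable_cos ν (m : ℝ) ψ
  have hint2' : Integrable (fun f : Φ →L[ℝ] ℝ => Real.cos (f ψ)) ν := by
    simpa using integrable_cos ν 1 ψ
  have key : ∫ f, (1 - Real.cos ((m : ℝ) * f ψ)) ∂ν
      ≤ ∫ f, (m : ℝ) ^ 2 * (1 - Real.cos (f ψ)) ∂ν := by
    refine integral_mono ((integrable_const (1:ℝ)).sub hint1)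
      (((integrable_const (1:ℝ)).sub hint2').const_mul _) fun f => ?_
    exact (trig_aux (f ψ) m).2
  rw [integral_sub (integrable_const (1:ℝ)) hint1, integral_const] at key
  rw [integral_const_mul, integral_sub (integrable_const (1:ℝ)) hint2', integral_const] at key
  simpa using key

private lemma convPow_charFun' [ContinuousSMul ℝ Φ] (ν : Measure (Φ →L[ℝ] ℝ))
    [IsProbabilityMeasure ν] :
    ∀ k : ℕ, convPow ν k = 0 ∨ (IsProbabilityMeasure (convPow ν k) ∧
      ∀ φ : Φ, charFun' (convPow ν k) φ = (charFun' ν φ) ^ k) := by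
  intro k
  induction k with
  | zero =>
    right
    constructor
    · show IsProbabilityMeasure (Measure.dirac 0)
      infer_instance
    · intro φ
      rw [show convPow ν 0 = Measure.dirac 0 from rfl, charFun',
        integral_dirac' _ _ (cont_integrand φ).stronglyMeasurable]
      simp
  | succ k ih =>
    have hdef : convPow ν (k + 1) = conv' (convPow ν k) ν := rfl
    rcases ih with h0 | ⟨hP, hF⟩
    · left
      rw [hdef, conv', h0, Measure.zero_prod, Measure.map_zero]
    · haveI := hP
      by_cases hm : AEMeasurable (fun q : (Φ →L[ℝ] ℝ) × (Φ →L[ℝ] ℝ) => q.1 + q.2)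
          ((convPow ν k).prod ν)
      · right
        constructor
        · rw [hdef, conv']
          exact Measure.isProbabilityMeasure_map hm
        · intro φ
          rw [hdef, charFun', conv', integral_map hm (cont_integrand φ).aestronglyMeasurable]
          have hsplit : ∀ q : (Φ →L[ℝ] ℝ) × (Φ →L[ℝ] ℝ),
              Complex.exp (Complex.I * (((q.1 + q.2) φ : ℝ) : ℂ))
                = Complex.exp (Complex.I * ((q.1 φ : ℝ) : ℂ))
                  * Complex.exp (Complex.I * ((q.2 φ : ℝ) : ℂ)) := by
            intro q
            rw [ContinuousLinearMap.add_apply, Complex.ofReal_add, mul_add, Complex.exp_add]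
          calc ∫ q, Complex.exp (Complex.I * (((q.1 + q.2) φ : ℝ) : ℂ))
                  ∂((convPow ν k).prod ν)
              = ∫ q, (fun f : Φ →L[ℝ] ℝ => Complex.exp (Complex.I * ((f φ : ℝ) : ℂ))) q.1
                  * (fun f : Φ →L[ℝ] ℝ => Complex.exp (Complex.I * ((f φ : ℝ) : ℂ))) q.2
                    ∂((convPow ν k).prod ν) := by
                congr 1
                funext q
                exact hsplit q
            _ = (∫ f, Complex.exp (Complex.I * ((f φ : ℝ) : ℂ)) ∂(convPow ν k))
                  * ∫ f, Complex.exp (Complex.I * ((f φ : ℝ) : ℂ)) ∂ν :=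
                MeasureTheory.integral_prod_mul (μ := convPow ν k) (ν := ν)
                  (fun f : Φ →L[ℝ] ℝ => Complex.exp (Complex.I * ((f φ : ℝ) : ℂ)))
                  (fun f : Φ →L[ℝ] ℝ => Complex.exp (Complex.I * ((f φ : ℝ) : ℂ)))
            _ = (charFun' ν φ) ^ (k + 1) := by
                rw [← charFun', ← charFun', hF φ, pow_succ]
      · left
        rw [hdef, conv', Measure.map_of_not_aemeasurable hm]

private lemma charFun'_ray_cont [ContinuousSMul ℝ Φ] (ν : Measure (Φ →L[ℝ] ℝ))
    [IsProbabilityMeasure ν] (ψ : Φ) :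
    Continuous fun t : ℝ => charFun' ν (t • ψ) := by
  have heq : (fun t : ℝ => charFun' ν (t • ψ))
      = fun t : ℝ => ∫ f, Complex.exp (Complex.I * ((t * f ψ : ℝ) : ℂ)) ∂ν := by
    funext t
    rw [charFun']
    congr 1
    funext f
    rw [ContinuousLinearMap.map_smul, smul_eq_mul]
  rw [heq]
  refine continuous_of_dominated (fun t => ?_) (fun t => ?_) (integrable_const (1:ℝ)) ?_
  · exact (Complex.continuous_exp.comp (continuous_const.mul
      (Complex.continuous_ofReal.comp (continuous_const.mul
        (continuous_eval_const ψ))))).aestronglyMeasurable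
  · exact Filter.Eventually.of_forall fun f => by rw [norm_exp_I_mul]
  · exact Filter.Eventually.of_forall fun f =>
      Complex.continuous_exp.comp (continuous_const.mul
        (Complex.continuous_ofReal.comp (continuous_mul_right _)))

private lemma root_step {n : ℕ} (hn : 0 < n) {g : ℝ → ℂ} (hg : Continuous g) (hg0 : g 0 = 1)
    (hpos : ∀ t ∈ Set.Icc (0:ℝ) 1, 0 < ((g t) ^ n).re) :
    g 1 = Complex.exp (Complex.log ((g 1) ^ n) / n) := by
  set ρ : ℝ → ℂ := fun t => Complex.exp (Complex.log ((g t) ^ n) / n) with hρ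
  have hslit : ∀ t ∈ Set.Icc (0:ℝ) 1, (g t) ^ n ∈ Complex.slitPlane := fun t ht =>
    Complex.mem_slitPlane_iff.2 (Or.inl (hpos t ht))
  have hne : ∀ t ∈ Set.Icc (0:ℝ) 1, (g t) ^ n ≠ 0 := by
    intro t ht h
    simpa [h] using hpos t ht
  have hρcont : ContinuousOn ρ (Set.Icc (0:ℝ) 1) := by
    apply Continuous.comp_continuousOn Complex.continuous_exp
    exact ((hg.pow n).continuousOn.clog hslit).div_const _
  have hρpow : ∀ t ∈ Set.Icc (0:ℝ) 1, (ρ t) ^ n = (g t) ^ n := by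
    intro t ht
    rw [hρ]
    rw [← Complex.exp_nat_mul, mul_div_cancel₀ _ (by exact_mod_cast hn.ne' : (n:ℂ) ≠ 0),
      Complex.exp_log (hne t ht)]
  have hu : ∀ t ∈ Set.Icc (0:ℝ) 1, (g t / ρ t) ^ n = 1 := by
    intro t ht
    rw [div_pow, hρpow t ht, div_self (hne t ht)]
  have hT : Set.Finite {z : ℂ | z ^ n = 1} := by
    refine Set.Finite.subset (Polynomial.nthRootsFinset n (1:ℂ)).finite_toSet fun z hz => ?_
    rw [Finset.mem_coe, Polynomial.mem_nthRootsFinset hn (1:ℂ)]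
    exact hz
  haveI := hT.to_subtype
  have hconst := isPreconnected_Icc.constant_of_mapsTo
    (f := fun t => g t / ρ t) (T := {z : ℂ | z ^ n = 1}) hT.isDiscrete
    (hg.continuousOn.div hρcont fun t _ => Complex.exp_ne_zero _)
    (fun t ht => hu t ht)
    (Set.right_mem_Icc.2 zero_le_one) (Set.left_mem_Icc.2 zero_le_one)
  have hρ0 : ρ 0 = 1 := by
    show Complex.exp (Complex.log ((g 0) ^ n) / n) = 1
    rw [hg0, one_pow, Complex.log_one, zero_div, Complex.exp_zero]
  have hρ1 : ρ 1 ≠ 0 := Complex.exp_ne_zero _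
  have hconst' : g 1 / ρ 1 = g 0 / ρ 0 := hconst
  rw [hg0, hρ0, div_one] at hconst'
  exact (div_eq_one_iff_eq hρ1).1 hconst'

set_option maxHeartbeats 1000000 in
private lemma estimate_aux {w : ℂ} {ε : ℝ} {n : ℕ} (hn : 0 < n) (hε0 : 0 < ε) (hε4 : ε ≤ 1/4)
    (hw1 : ‖w‖ ≤ 1) (hwε : ‖1 - w‖ < ε) :
    (n : ℝ) * (1 - (Complex.exp (Complex.log w / n)).re) ≤ 2 * ε := by
  have hre : 1 - ε ≤ w.re := by
    have h := Complex.abs_re_le_norm (1 - w)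
    rw [Complex.sub_re, Complex.one_re] at h
    have h' := abs_le.1 h
    linarith [h'.2, hwε.le]
  have him : |w.im| ≤ ε := by
    have h := Complex.abs_im_le_norm (1 - w)
    rw [Complex.sub_im, Complex.one_im, zero_sub, abs_neg] at h
    linarith [hwε.le]
  have habs : 1 - ε ≤ ‖w‖ := le_trans hre (Complex.re_le_norm w)
  have h34 : (3:ℝ)/4 ≤ ‖w‖ := by linarith
  have hrepos : 0 < w.re := by linarith
  have hwne : w ≠ 0 := fun h => by simp [h] at hrepos
  set a : ℝ := Real.log (‖w‖) with ha
  set b : ℝ := Complex.arg w with hb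
  have hcast : ((n : ℂ)) = (((n : ℝ)) : ℂ) := by push_cast; ring
  have hre_exp : (Complex.exp (Complex.log w / n)).re
      = Real.exp (a / n) * Real.cos (b / n) := by
    rw [Complex.exp_re, hcast, Complex.div_ofReal_re, Complex.div_ofReal_im,
      Complex.log_re, Complex.log_im]
  have ha0 : a ≤ 0 := Real.log_nonpos (by positivity) hw1
  have haε : -a ≤ (4/3) * ε := by
    have h1 : Real.log (1 - ε) ≤ a := Real.log_le_log (by linarith) habs
    have hε1 : (0:ℝ) < 1 - ε := by linarith
    have h2 : Real.log ((1 - ε)⁻¹) ≤ (1 - ε)⁻¹ - 1 :=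
      Real.log_le_sub_one_of_pos (by positivity)
    rw [Real.log_inv] at h2
    have h3 : (1 - ε)⁻¹ - 1 ≤ (4/3) * ε := by
      rw [inv_eq_one_div, div_sub' (by linarith : (1:ℝ) - ε ≠ 0),
        div_le_iff₀ (by linarith : (0:ℝ) < 1 - ε)]
      nlinarith
    linarith
  have hbpi : |b| < Real.pi / 2 :=
    Complex.abs_arg_lt_pi_div_two_iff.2 (Or.inl hrepos)
  have hsinb : Real.sin |b| = |w.im| / ‖w‖ := by
    have hsa : Real.sin b = w.im / ‖w‖ := Complex.sin_arg w
    have habspos : (0:ℝ) < ‖w‖ := by linarith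
    rcases le_or_gt 0 b with hb0 | hb0
    · have him0 : 0 ≤ w.im := (Complex.arg_nonneg_iff).1 hb0
      rw [_root_.abs_of_nonneg hb0, hsa, _root_.abs_of_nonneg him0]
    · have him0 : w.im < 0 := (Complex.arg_neg_iff).1 hb0
      rw [_root_.abs_of_neg hb0, Real.sin_neg, hsa, _root_.abs_of_neg him0, neg_div]
  have hkey : 2 / Real.pi * |b| ≤ Real.sin |b| := Real.mul_le_sin (abs_nonneg b) hbpi.le
  have himd : |w.im| / ‖w‖ ≤ (4/3) * ε := by
    rw [div_le_iff₀ (by linarith : (0:ℝ) < ‖w‖)]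
    nlinarith
  have hbb : |b| ≤ (21/10) * ε := by
    have hπ : Real.pi ≤ 63/20 := by
      have h := Real.pi_lt_d2
      norm_num at h
      linarith
    have hπ0 : 0 < Real.pi := Real.pi_pos
    have : |b| ≤ Real.pi / 2 * ((4/3) * ε) := by
      rw [hsinb] at hkey
      have h5 : 2 / Real.pi * |b| ≤ (4/3) * ε := le_trans hkey himd
      have h6 := mul_le_mul_of_nonneg_left h5 (le_of_lt (by positivity : (0:ℝ) < Real.pi / 2))
      calc |b| = Real.pi / 2 * (2 / Real.pi * |b|) := by
            field_simp
        _ ≤ Real.pi / 2 * ((4/3) * ε) := h6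
    nlinarith [abs_nonneg b]
  -- final estimate
  rw [hre_exp]
  have hn1 : (1:ℝ) ≤ n := by exact_mod_cast hn
  have hnne : (n:ℝ) ≠ 0 := by positivity
  have hc1 : 1 - Real.cos (b / n) ≤ (b / n)^2 / 2 := by
    linarith [Real.one_sub_sq_div_two_le_cos (x := b / n)]
  have hcos1 : Real.cos (b / n) ≤ 1 := Real.cos_le_one _
  have hexple : Real.exp (a / n) ≤ 1 := by
    rw [← Real.exp_zero]
    exact Real.exp_le_exp.2 (div_nonpos_of_nonpos_of_nonneg ha0 (by positivity))
  have hexp2 : 1 - Real.exp (a / n) ≤ -(a / n) := by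
    linarith [Real.add_one_le_exp (a / n)]
  have e1 : (n:ℝ) * (1 - Real.cos (b / n)) ≤ b^2 / 2 := by
    have h5 : (n:ℝ) * (1 - Real.cos (b / n)) ≤ (n:ℝ) * ((b / n)^2 / 2) :=
      mul_le_mul_of_nonneg_left hc1 (by positivity)
    have h6 : (n:ℝ) * ((b / n)^2 / 2) = b^2 / 2 * ((n:ℝ))⁻¹ := by
      field_simp
    have h7 : b^2 / 2 * ((n:ℝ))⁻¹ ≤ b^2 / 2 * 1 :=
      mul_le_mul_of_nonneg_left (inv_le_one_of_one_le₀ hn1) (by positivity)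
    rw [h6] at h5
    linarith
  have e2 : (n:ℝ) * (Real.cos (b / n) * (1 - Real.exp (a / n))) ≤ -a := by
    have h6 : Real.cos (b / n) * (1 - Real.exp (a / n)) ≤ 1 - Real.exp (a / n) := by
      have hE : (0:ℝ) ≤ 1 - Real.exp (a / n) := by linarith
      nlinarith [mul_le_mul_of_nonneg_right hcos1 hE]
    have h7 : (n:ℝ) * (1 - Real.exp (a / n)) ≤ (n:ℝ) * (-(a / n)) :=
      mul_le_mul_of_nonneg_left hexp2 (by positivity)
    have h8 : (n:ℝ) * (-(a / n)) = -a := by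
      rw [mul_neg, mul_div_cancel₀ _ hnne]
    have h9 : (n:ℝ) * (Real.cos (b / n) * (1 - Real.exp (a / n)))
        ≤ (n:ℝ) * (1 - Real.exp (a / n)) :=
      mul_le_mul_of_nonneg_left h6 (by positivity)
    linarith
  have hdecomp : (n:ℝ) * (1 - Real.exp (a / n) * Real.cos (b / n))
      = (n:ℝ) * (1 - Real.cos (b / n))
        + (n:ℝ) * (Real.cos (b / n) * (1 - Real.exp (a / n))) := by ring
  have hb2 : b^2 ≤ ((21/10) * ε)^2 := by
    nlinarith [abs_nonneg b, _root_.sq_abs b]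
  rw [hdecomp]
  nlinarith [e1, e2, haε, hb2, mul_le_mul_of_nonneg_left hε4 hε0.le]

end AuxStatement12

/-- Fernique-type estimate: if `μ` is infinitely divisible and
`|1 − μ̂(φ)| < ε` on the unit ball of `p` (with `0 < ε ≤ 1/4`), then for every `n`-th
convolution root `ν` of `μ`, `n·(1 − Re ν̂(φ)) ≤ 8ε(1 + p(φ)²)`. -/
theorem statement12 [IsNuclearSpace Φ] [BorelSpace (Φ →L[ℝ] ℝ)]
    (μ : Measure (Φ →L[ℝ] ℝ)) [IsProbabilityMeasure μ] (hrad : IsRadon μ)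
    (hID : ∀ n : ℕ, 0 < n → ∃ ν : Measure (Φ →L[ℝ] ℝ),
      IsProbabilityMeasure ν ∧ IsRadon ν ∧ convPow ν n = μ)
    (p : Seminorm ℝ Φ) (hpc : Continuous ⇑p) (hpH : IsHilbertian p)
    (ε : ℝ) (hε0 : 0 < ε) (hε4 : ε ≤ 1 / 4)
    (hsmall : ∀ φ : Φ, p φ ≤ 1 → ‖1 - charFun' μ φ‖ < ε) :
    ∀ n : ℕ, 0 < n → ∀ ν : Measure (Φ →L[ℝ] ℝ),
      IsProbabilityMeasure ν → IsRadon ν → convPow ν n = μ →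
      ∀ φ : Φ, (n : ℝ) * (1 - (charFun' ν φ).re) ≤ 8 * ε * (1 + (p φ) ^ 2) := by
  obtain ⟨ι, hne, P, hgen, -, -⟩ := ‹IsNuclearSpace Φ›.out
  haveI := hne
  haveI hsm : ContinuousSMul ℝ Φ := WithSeminorms.continuousSMul hgen
  intro n hn ν hνP hνR hconv φ
  haveI := hνP
  have hpow : ∀ χ : Φ, charFun' μ χ = (charFun' ν χ) ^ n := by
    rcases convPow_charFun' ν n with h0 | ⟨_, hF⟩
    · exfalso
      rw [hconv] at h0
      exact (IsProbabilityMeasure.ne_zero μ) h0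
    · intro χ
      rw [← hconv]
      exact hF χ
  have hball : ∀ ψ : Φ, p ψ ≤ 1 → (n:ℝ) * (1 - (charFun' ν ψ).re) ≤ 2 * ε := by
    intro ψ hψ
    have hgc : Continuous fun t : ℝ => charFun' ν (t • ψ) := charFun'_ray_cont ν ψ
    have hg0 : charFun' ν ((0:ℝ) • ψ) = 1 := by rw [zero_smul]; exact charFun'_zero ν
    have hpos : ∀ t ∈ Set.Icc (0:ℝ) 1, 0 < ((charFun' ν (t • ψ)) ^ n).re := by
      intro t ht
      rw [← hpow (t • ψ)]
      have hpt : p (t • ψ) ≤ 1 := by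
        rw [map_smul_eq_mul]
        have ht1 : ‖t‖ ≤ 1 := by
          rw [Real.norm_eq_abs, _root_.abs_of_nonneg ht.1]
          exact ht.2
        calc ‖t‖ * p ψ ≤ 1 * 1 := mul_le_mul ht1 hψ (apply_nonneg p ψ) zero_le_one
          _ = 1 := mul_one 1
      have h1 := hsmall _ hpt
      have h2 := Complex.abs_re_le_norm (1 - charFun' μ (t • ψ))
      rw [Complex.sub_re, Complex.one_re] at h2
      have h3 := abs_le.1 h2
      linarith [h3.2]
    have hroot := root_step hn hgc hg0 hpos
    simp only [one_smul] at hroot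
    rw [← hpow ψ] at hroot
    rw [hroot]
    exact estimate_aux hn hε0 hε4 (charFun'_abs_le_one μ ψ) (hsmall ψ hψ)
  by_cases hR : p φ ≤ 1
  · have h := hball φ hR
    nlinarith [mul_nonneg hε0.le (sq_nonneg (p φ))]
  · push_neg at hR
    set m : ℕ := ⌈p φ⌉₊ with hm
    have hp0 : (0:ℝ) ≤ p φ := apply_nonneg p φ
    have hmR : p φ ≤ m := Nat.le_ceil _
    have hm1 : (1:ℝ) ≤ m := le_trans hR.le hmR
    have hmpos : (0:ℝ) < m := by linarith
    set ψ := ((m:ℝ))⁻¹ • φ with hψdef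
    have hψ : p ψ ≤ 1 := by
      rw [hψdef, map_smul_eq_mul, Real.norm_eq_abs, abs_of_pos (by positivity)]
      have h := mul_le_mul_of_nonneg_left hmR (by positivity : (0:ℝ) ≤ ((m:ℝ))⁻¹)
      rwa [inv_mul_cancel₀ hmpos.ne'] at h
    have hb := hball ψ hψ
    have hsc := charFun'_scale_le ν ψ m
    have hms : ((m:ℝ)) • ψ = φ := by
      rw [hψdef, smul_smul, mul_inv_cancel₀ hmpos.ne', one_smul]
    rw [hms] at hsc
    have hn0 : (0:ℝ) ≤ n := Nat.cast_nonneg n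
    have hmR2 : (m:ℝ) ≤ p φ + 1 := by
      have h := Nat.ceil_lt_add_one hp0
      exact_mod_cast h.le
    have h1 : (n:ℝ) * (1 - (charFun' ν φ).re) ≤ (m:ℝ)^2 * ((n:ℝ) * (1 - (charFun' ν ψ).re)) := by
      nlinarith [mul_le_mul_of_nonneg_left hsc hn0]
    have h2 : (m:ℝ)^2 * ((n:ℝ) * (1 - (charFun' ν ψ).re)) ≤ (m:ℝ)^2 * (2*ε) :=
      mul_le_mul_of_nonneg_left hb (by positivity)
    have hm2 : (m:ℝ)^2 ≤ 2 * (1 + (p φ)^2) := by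
      nlinarith [sq_nonneg (p φ - 1)]
    have h3 : (m:ℝ)^2 * (2*ε) ≤ 8 * ε * (1 + (p φ)^2) := by
      nlinarith [mul_le_mul_of_nonneg_right hm2 (by positivity : (0:ℝ) ≤ 2*ε)]
    linarith
end
end
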